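/- (Lemma 2) Let ρ > 0, l ∈ ℕ, N ∈ ℕ, let R ∈ ℝ^{l×l} be symmetric positive definite, and let z : [0,1] × [0,∞) → ℝ^l be continuously differentiable, satisfy the transport equation z_t(x,t) = −ρ z_x(x,t) for all (x,t) ∈ [0,1] × [0,∞), and have zero initial condition z(x,0) = 0 for all x ∈ [0,1]. Define Ω_k(t) = ∫₀¹ z(x,t) 𝓛_k(x) dx. Then for every T ≥ 0: ∫₀^T ( z(0,t)ᵀ R z(0,t) − Σ_{k=0}^{N} (2k+1) Ω_k(t)ᵀ R Ω_k(t) ) dt ≥ 0. -/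

import Mathlib

open Finset Matrix

/-- The shifted Legendre polynomial on `[0,1]`:
`𝓛_k(x) = (−1)^k ∑_{l=0}^{k} (−1)^l (k choose l) ((k+l) choose l) x^l`. -/
noncomputable def shiftedLegendre (k : ℕ) (x : ℝ) : ℝ :=
  (-1 : ℝ) ^ k *
    ∑ l ∈ range (k + 1),
      (-1 : ℝ) ^ l * (k.choose l) * ((k + l).choose l) * x ^ l

open Polynomial intervalIntegral MeasureTheory

noncomputable def legPoly (k : ℕ) : Polynomial ℝ :=
  ∑ l ∈ range (k + 1),
    Polynomial.C ((-1 : ℝ) ^ k * ((-1 : ℝ) ^ l * (k.choose l) * ((k + l).choose l))) * Polynomial.X ^ l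

lemma legPoly_eval (k : ℕ) (x : ℝ) : (legPoly k).eval x = shiftedLegendre k x := by
  simp only [legPoly, _root_.shiftedLegendre, Polynomial.eval_finset_sum, Polynomial.eval_mul,
    Polynomial.eval_C, Polynomial.eval_pow, Polynomial.eval_X, Finset.mul_sum]
  exact Finset.sum_congr rfl fun l _ => by ring

noncomputable def legF (k : ℕ) : Polynomial ℝ := ((X : Polynomial ℝ) ^ 2 - X) ^ k

lemma legF_expand (k : ℕ) :
    legF k = ∑ m ∈ range (k + 1),
      Polynomial.C ((-1 : ℝ) ^ (k - m) * (k.choose m)) * Polynomial.X ^ (k + m) := by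
  have h : legF k = ((X : Polynomial ℝ) ^ 2 + (-X)) ^ k := by rw [legF]; ring_nf
  rw [h, add_pow]
  refine Finset.sum_congr rfl fun m hm => ?_
  have hm' : m ≤ k := by simpa [Nat.lt_succ_iff] using hm
  rw [neg_pow, ← pow_mul]
  have h1 : ((-1 : Polynomial ℝ)) ^ (k - m) = Polynomial.C ((-1 : ℝ) ^ (k - m)) := by simp
  have h2 : ((k.choose m : Polynomial ℝ)) = Polynomial.C ((k.choose m : ℝ)) := by simp
  have h3 : (X : Polynomial ℝ) ^ (2 * m) * X ^ (k - m) = X ^ (k + m) := by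
    rw [← pow_add]; congr 1; omega
  rw [h1, h2, mul_comm ((2:ℕ)) m]
  calc (X : Polynomial ℝ) ^ (m * 2) * (Polynomial.C ((-1:ℝ)^(k-m)) * X ^ (k-m)) * Polynomial.C ((k.choose m : ℝ))
      = Polynomial.C ((-1:ℝ)^(k-m)) * Polynomial.C ((k.choose m : ℝ)) * (X ^ (2*m) * X ^ (k-m)) := by ring_nf
    _ = Polynomial.C ((-1 : ℝ) ^ (k - m) * (k.choose m)) * X ^ (k + m) := by rw [h3, ← Polynomial.C_mul]

lemma iterate_derivative_legF (k : ℕ) :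
    derivative^[k] (legF k) = Polynomial.C (k.factorial : ℝ) * legPoly k := by
  rw [legF_expand, Polynomial.iterate_derivative_sum, legPoly, Finset.mul_sum]
  refine Finset.sum_congr rfl fun m hm => ?_
  have hm' : m ≤ k := by simpa [Nat.lt_succ_iff] using hm
  rw [Polynomial.iterate_derivative_C_mul, Polynomial.iterate_derivative_X_pow_eq_C_mul]
  have h1 : k + m - k = m := by omega
  rw [h1, ← mul_assoc, ← Polynomial.C_mul, ← mul_assoc, ← Polynomial.C_mul]
  congr 2
  have hchoose : (k+m).choose k = (k+m).choose m := by
    have := Nat.choose_symm (Nat.le_add_right k m)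
    simpa [Nat.add_sub_cancel_left] using this.symm
  have hsign : (-1:ℝ)^(k-m) = (-1)^k * (-1)^m := by
    rw [← pow_add]
    conv_rhs => rw [show k + m = (k-m) + 2*m by omega]
    rw [pow_add, pow_mul]; simp
  rw [Nat.descFactorial_eq_factorial_mul_choose, hsign, hchoose]
  push_cast
  ring

lemma legF_coeff_lt (k j : ℕ) (hj : j < k) : (legF k).coeff j = 0 := by
  rw [legF_expand, Polynomial.finset_sum_coeff]
  refine Finset.sum_eq_zero fun m _ => ?_
  rw [Polynomial.coeff_C_mul, Polynomial.coeff_X_pow, if_neg (by omega)]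
  ring

lemma legF_deriv_eval_zero (k j : ℕ) (hj : j < k) :
    (derivative^[j] (legF k)).eval 0 = 0 := by
  rw [← Polynomial.coeff_zero_eq_eval_zero, Polynomial.coeff_iterate_derivative,
    Nat.zero_add, legF_coeff_lt k j hj]
  simp

lemma legF_comp (k : ℕ) : (legF k).comp (1 - Polynomial.X) = legF k := by
  rw [legF, Polynomial.pow_comp]
  congr 1
  simp only [Polynomial.sub_comp, Polynomial.pow_comp, Polynomial.X_comp]
  ring

lemma legF_deriv_eval_one (k j : ℕ) (hj : j < k) :
    (derivative^[j] (legF k)).eval 1 = 0 := by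
  have h := Polynomial.iterate_derivative_comp_one_sub_X (legF k) j
  rw [legF_comp] at h
  have := congrArg (Polynomial.eval (1:ℝ)) h
  simp only [Polynomial.eval_mul, Polynomial.eval_pow, Polynomial.eval_comp,
    Polynomial.eval_sub, Polynomial.eval_one, Polynomial.eval_X, sub_self,
    Polynomial.eval_neg, Polynomial.eval_one] at this
  rw [this, ← Polynomial.coeff_zero_eq_eval_zero, Polynomial.coeff_iterate_derivative,
    Nat.zero_add, legF_coeff_lt k j hj]
  simp

lemma leg_parts (k : ℕ) (p : Polynomial ℝ) : ∀ m, m ≤ k →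
    (∫ x in (0:ℝ)..1, p.eval x * (derivative^[k] (legF k)).eval x)
      = (-1:ℝ)^m * ∫ x in (0:ℝ)..1,
          (derivative^[m] p).eval x * (derivative^[k-m] (legF k)).eval x := by
  intro m
  induction m with
  | zero => intro _; simp
  | succ m ih =>
    intro hm
    have hmk : m < k := by omega
    rw [ih (by omega)]
    have hstep :
        (∫ x in (0:ℝ)..1, (derivative^[m] p).eval x * (derivative^[k-m] (legF k)).eval x)
        = - ∫ x in (0:ℝ)..1,
            (derivative^[m+1] p).eval x * (derivative^[k-(m+1)] (legF k)).eval x := by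
      have hkm : k - m = (k - (m+1)) + 1 := by omega
      have hv : ∀ x : ℝ, HasDerivAt (fun y => (derivative^[k-(m+1)] (legF k)).eval y)
          ((derivative^[k-m] (legF k)).eval x) x := by
        intro x
        have h0 := Polynomial.hasDerivAt (derivative^[k-(m+1)] (legF k)) x
        have e1 : (derivative^[k-m] (legF k) : Polynomial ℝ)
            = derivative (derivative^[k-(m+1)] (legF k)) := by
          rw [hkm, Function.iterate_succ_apply']
        rw [e1]; exact h0
      have hu : ∀ x : ℝ, HasDerivAt (fun y => (derivative^[m] p).eval y)
          ((derivative^[m+1] p).eval x) x := by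
        intro x
        have h0 := Polynomial.hasDerivAt (derivative^[m] p) x
        have e2 : (derivative^[m+1] p : Polynomial ℝ) = derivative (derivative^[m] p) :=
          Function.iterate_succ_apply' _ _ _
        rw [e2]; exact h0
      have h := intervalIntegral.integral_mul_deriv_eq_deriv_mul (a := (0:ℝ)) (b := (1:ℝ))
        (u := fun y => (derivative^[m] p).eval y)
        (v := fun y => (derivative^[k-(m+1)] (legF k)).eval y)
        (u' := fun y => (derivative^[m+1] p).eval y)
        (v' := fun y => (derivative^[k-m] (legF k)).eval y)
        (fun x _ => hu x) (fun x _ => hv x)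
        ((Polynomial.continuous _).intervalIntegrable _ _)
        ((Polynomial.continuous _).intervalIntegrable _ _)
      simp only [legF_deriv_eval_zero k _ (show k-(m+1) < k by omega),
        legF_deriv_eval_one k _ (show k-(m+1) < k by omega), mul_zero, zero_mul,
        sub_zero, zero_sub] at h
      simpa using h
    rw [hstep]
    ring

lemma leg_parts_full (k : ℕ) (p : Polynomial ℝ) :
    (∫ x in (0:ℝ)..1, p.eval x * (derivative^[k] (legF k)).eval x)
      = (-1:ℝ)^k * ∫ x in (0:ℝ)..1, (derivative^[k] p).eval x * (legF k).eval x := by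
  simpa using leg_parts k p k le_rfl

lemma beta_nat : ∀ (b a : ℕ), (∫ x in (0:ℝ)..1, x ^ a * (1 - x) ^ b)
    = (a.factorial * b.factorial : ℝ) / ((a + b + 1).factorial) := by
  intro b
  induction b with
  | zero =>
    intro a
    have : ((a.factorial:ℝ)) ≠ 0 := by positivity
    simp [integral_pow, Nat.factorial_succ]
    field_simp
  | succ b ih =>
    intro a
    have hu : ∀ x : ℝ, HasDerivAt (fun y : ℝ => (1 - y) ^ (b+1))
        (-((b+1 : ℝ) * (1 - x) ^ b)) x := by
      intro x
      have h1 : HasDerivAt (fun y : ℝ => 1 - y) (-1) x := by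
        simpa using (hasDerivAt_id x).const_sub 1
      have := h1.fun_pow (b+1)
      simpa [mul_comm, mul_assoc] using this
    have hv : ∀ x : ℝ, HasDerivAt (fun y : ℝ => y ^ (a+1) / (a+1))
        (x ^ a) x := by
      intro x
      have := (hasDerivAt_pow (a+1) x).div_const (a+1)
      have ha : ((a:ℝ)+1) ≠ 0 := by positivity
      simpa [mul_comm, mul_div_assoc, mul_div_cancel_left₀, ha] using this
    have h := intervalIntegral.integral_mul_deriv_eq_deriv_mul (a := (0:ℝ)) (b := (1:ℝ))
      (u := fun y : ℝ => (1 - y) ^ (b+1)) (v := fun y : ℝ => y ^ (a+1) / (a+1))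
      (u' := fun y : ℝ => -((b+1 : ℝ) * (1 - y) ^ b)) (v' := fun y : ℝ => y ^ a)
      (fun x _ => hu x) (fun x _ => hv x)
      ((Continuous.intervalIntegrable (by fun_prop) _ _))
      ((Continuous.intervalIntegrable (by fun_prop) _ _))
    have e1 : (∫ x in (0:ℝ)..1, x ^ a * (1 - x) ^ (b+1))
        = ∫ x in (0:ℝ)..1, (1 - x) ^ (b+1) * x ^ a := by
      apply intervalIntegral.integral_congr; intro x _; ring
    rw [e1, h]
    have e2 : (∫ x in (0:ℝ)..1, -((b+1 : ℝ) * (1 - x) ^ b) * (x ^ (a+1) / (a+1)))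
        = (-((b:ℝ)+1)/((a:ℝ)+1)) * ∫ x in (0:ℝ)..1, x ^ (a+1) * (1 - x) ^ b := by
      rw [← intervalIntegral.integral_const_mul]
      apply intervalIntegral.integral_congr; intro x _; field_simp
    rw [e2, ih (a+1)]
    have ha : ((a:ℝ)+1) ≠ 0 := by positivity
    have hfact : ((a + 1 + b + 1).factorial : ℝ) = ((a + (b+1) + 1).factorial : ℝ) := by
      norm_num [show a + 1 + b + 1 = a + (b+1) + 1 by omega]
    simp only [Nat.factorial_succ]
    push_cast [hfact]
    have hne : ((a + (b+1) + 1).factorial : ℝ) ≠ 0 := by positivity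
    push_cast [Nat.factorial_succ] at hfact ⊢
    field_simp
    ring_nf

lemma legPoly_natDegree_le (k : ℕ) : (legPoly k).natDegree ≤ k := by
  refine Polynomial.natDegree_sum_le_of_forall_le _ _ fun l hl => ?_
  refine le_trans (Polynomial.natDegree_C_mul_le _ _) ?_
  simpa [Polynomial.natDegree_X_pow] using (by simpa [Nat.lt_succ_iff] using hl : l ≤ k)

lemma deriv_eval_eq (k : ℕ) (x : ℝ) :
    (derivative^[k] (legF k)).eval x = (k.factorial : ℝ) * shiftedLegendre k x := by
  rw [iterate_derivative_legF]; simp [legPoly_eval]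

lemma leg_orth_lt {j k : ℕ} (hjk : j < k) :
    (∫ x in (0:ℝ)..1, shiftedLegendre j x * shiftedLegendre k x) = 0 := by
  have h := leg_parts_full k (legPoly j)
  rw [Polynomial.iterate_derivative_eq_zero (lt_of_le_of_lt (legPoly_natDegree_le j) hjk)] at h
  simp only [Polynomial.eval_zero, zero_mul, intervalIntegral.integral_zero, mul_zero] at h
  have e : (∫ x in (0:ℝ)..1, (legPoly j).eval x * (derivative^[k] (legF k)).eval x)
      = (k.factorial : ℝ) * ∫ x in (0:ℝ)..1, shiftedLegendre j x * shiftedLegendre k x := by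
    rw [← intervalIntegral.integral_const_mul]
    apply intervalIntegral.integral_congr
    intro x _
    simp only [legPoly_eval, deriv_eval_eq]; ring
  rw [e] at h
  have : (k.factorial : ℝ) ≠ 0 := by positivity
  exact (mul_eq_zero.mp h).resolve_left this

lemma iterate_derivative_legPoly_self (k : ℕ) :
    derivative^[k] (legPoly k) = Polynomial.C (((k+k).choose k : ℝ) * k.factorial) := by
  rw [legPoly, Polynomial.iterate_derivative_sum, Finset.sum_range_succ]
  have h1 : ∀ l ∈ range k,
      derivative^[k] (Polynomial.C ((-1 : ℝ) ^ k * ((-1 : ℝ) ^ l * (k.choose l) * ((k + l).choose l))) * Polynomial.X ^ l) = 0 := by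
    intro l hl
    rw [Polynomial.iterate_derivative_C_mul, Polynomial.iterate_derivative_X_pow_eq_C_mul,
      Nat.descFactorial_eq_zero_iff_lt.mpr (Finset.mem_range.mp hl)]
    simp
  rw [Finset.sum_eq_zero h1, zero_add, Polynomial.iterate_derivative_C_mul,
    Polynomial.iterate_derivative_X_pow_eq_C_mul, Nat.descFactorial_self, Nat.sub_self,
    pow_zero, mul_one, ← Polynomial.C_mul]
  congr 1
  rw [Nat.choose_self]
  have hmm : ((-1:ℝ)^k) * ((-1:ℝ)^k) = 1 := by
    rw [← pow_add, ← two_mul, pow_mul]; norm_num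
  push_cast
  linear_combination (((k+k).choose k : ℝ) * (k.factorial:ℝ)) * hmm

lemma leg_orth_self (k : ℕ) :
    (∫ x in (0:ℝ)..1, shiftedLegendre k x * shiftedLegendre k x) = 1 / (2 * (k:ℝ) + 1) := by
  have h := leg_parts_full k (legPoly k)
  rw [iterate_derivative_legPoly_self] at h
  have e : (∫ x in (0:ℝ)..1, (legPoly k).eval x * (derivative^[k] (legF k)).eval x)
      = (k.factorial : ℝ) * ∫ x in (0:ℝ)..1, shiftedLegendre k x * shiftedLegendre k x := by
    rw [← intervalIntegral.integral_const_mul]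
    apply intervalIntegral.integral_congr
    intro x _
    simp only [legPoly_eval, deriv_eval_eq]; ring
  rw [e] at h
  have e2 : (∫ x in (0:ℝ)..1, (Polynomial.C (((k+k).choose k : ℝ) * k.factorial)).eval x * (legF k).eval x)
      = (((k+k).choose k : ℝ) * k.factorial * (-1:ℝ)^k) *
        ((k.factorial * k.factorial : ℝ) / ((k + k + 1).factorial)) := by
    have e3 : (∫ x in (0:ℝ)..1, (Polynomial.C (((k+k).choose k : ℝ) * k.factorial)).eval x * (legF k).eval x)
        = (((k+k).choose k : ℝ) * k.factorial * (-1:ℝ)^k) * ∫ x in (0:ℝ)..1, x ^ k * (1 - x) ^ k := by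
      rw [← intervalIntegral.integral_const_mul]
      apply intervalIntegral.integral_congr
      intro x _
      simp only [Polynomial.eval_C, legF, Polynomial.eval_pow, Polynomial.eval_sub,
        Polynomial.eval_X]
      rw [show x^2 - x = (-1) * (x * (1-x)) by ring, mul_pow, mul_pow]
      ring
    rw [e3, beta_nat k k]
  rw [e2] at h
  set A := ∫ x in (0:ℝ)..1, shiftedLegendre k x * shiftedLegendre k x with hA
  set c : ℝ := ((k+k).choose k : ℝ) with hc
  set B : ℝ := (k.factorial * k.factorial : ℝ) / ((k + k + 1).factorial) with hB
  have hmm : ((-1:ℝ)^k) * ((-1:ℝ)^k) = 1 := by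
    rw [← pow_add, ← two_mul, pow_mul]; norm_num
  have hkf : (k.factorial : ℝ) ≠ 0 := by positivity
  have hfne : ((k + k + 1).factorial : ℝ) ≠ 0 := by positivity
  have h3 : (k.factorial : ℝ) * A = c * (k.factorial : ℝ) * B := by
    linear_combination h + (c * (k.factorial : ℝ) * B) * hmm
  have h4 : A = c * B :=
    mul_left_cancel₀ hkf (by rw [h3]; ring)
  have hfac : c * ((k.factorial : ℝ) * k.factorial) = ((k+k).factorial : ℝ) := by
    have := Nat.choose_mul_factorial_mul_factorial (Nat.le_add_left k k)
    rw [Nat.add_sub_cancel] at this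
    push_cast [← this]
    ring
  have hsucc : ((k + k + 1).factorial : ℝ) = (2 * (k:ℝ) + 1) * ((k+k).factorial : ℝ) := by
    rw [Nat.factorial_succ]; push_cast; ring
  rw [h4, hB]
  have h2k1 : (2*(k:ℝ)+1) ≠ 0 := by positivity
  field_simp
  rw [hsucc]
  linear_combination (2*(k:ℝ)+1) * hfac

lemma shiftedLegendre_orth (j k : ℕ) :
    (∫ x in (0:ℝ)..1, shiftedLegendre j x * shiftedLegendre k x)
      = if j = k then 1 / (2 * (k:ℝ) + 1) else 0 := by
  rcases lt_trichotomy j k with h | h | h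
  · rw [leg_orth_lt h, if_neg (ne_of_lt h)]
  · subst h; rw [if_pos rfl]; exact leg_orth_self j
  · rw [if_neg (ne_of_gt h),
      show (∫ x in (0:ℝ)..1, shiftedLegendre j x * shiftedLegendre k x)
          = ∫ x in (0:ℝ)..1, shiftedLegendre k x * shiftedLegendre j x from
        intervalIntegral.integral_congr fun x _ => mul_comm _ _,
      leg_orth_lt h]

lemma shiftedLegendre_continuous (k : ℕ) : Continuous (shiftedLegendre k) := by
  unfold _root_.shiftedLegendre; fun_prop

section Vec
variable {l : ℕ}

lemma sum_dotProduct' {ι : Type*} (s : Finset ι) (f : ι → Fin l → ℝ) (v : Fin l → ℝ) :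
    (∑ i ∈ s, f i) ⬝ᵥ v = ∑ i ∈ s, f i ⬝ᵥ v := by
  unfold dotProduct
  rw [Finset.sum_comm]
  exact Finset.sum_congr rfl fun j _ => by rw [Finset.sum_apply, Finset.sum_mul]

lemma dotProduct_sum' {ι : Type*} (s : Finset ι) (v : Fin l → ℝ) (f : ι → Fin l → ℝ) :
    v ⬝ᵥ (∑ i ∈ s, f i) = ∑ i ∈ s, v ⬝ᵥ f i := by
  unfold dotProduct
  rw [Finset.sum_comm]
  exact Finset.sum_congr rfl fun j _ => by rw [Finset.sum_apply, Finset.mul_sum]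

lemma mulVec_sum' (R : Matrix (Fin l) (Fin l) ℝ) {ι : Type*} (s : Finset ι)
    (f : ι → Fin l → ℝ) :
    R.mulVec (∑ i ∈ s, f i) = ∑ i ∈ s, R.mulVec (f i) := by
  funext i
  rw [Finset.sum_apply]
  exact (dotProduct_sum' s (fun j => R i j) f).trans rfl

lemma cont_quad2 {X : Type*} [TopologicalSpace X] (R : Matrix (Fin l) (Fin l) ℝ)
    {u v : X → Fin l → ℝ} (hu : Continuous u) (hv : Continuous v) :
    Continuous fun x => u x ⬝ᵥ R.mulVec (v x) := by
  simp only [dotProduct, Matrix.mulVec]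
  exact continuous_finset_sum _ fun i _ => ((continuous_apply i).comp hu).mul
    (continuous_finset_sum _ fun j _ => continuous_const.mul ((continuous_apply j).comp hv))

lemma hasDerivAt_quad (R : Matrix (Fin l) (Fin l) ℝ)
    (hsym : ∀ u v : Fin l → ℝ, u ⬝ᵥ R.mulVec v = v ⬝ᵥ R.mulVec u)
    {f : ℝ → Fin l → ℝ} {f' : Fin l → ℝ} {t : ℝ} (hf : HasDerivAt f f' t) :
    HasDerivAt (fun s => f s ⬝ᵥ R.mulVec (f s)) (2 * (f' ⬝ᵥ R.mulVec (f t))) t := by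
  have hfi : ∀ i, HasDerivAt (fun s => f s i) (f' i) t := fun i => hasDerivAt_pi.1 hf i
  have h1 : HasDerivAt (fun s => ∑ i : Fin l, f s i * ∑ j : Fin l, R i j * f s j)
      (∑ i : Fin l, (f' i * ∑ j : Fin l, R i j * f t j
        + f t i * ∑ j : Fin l, R i j * f' j)) t := by
    refine HasDerivAt.fun_sum fun i _ => ?_
    exact (hfi i).mul (HasDerivAt.fun_sum fun j _ => (hfi j).const_mul (R i j))
  have he : (∑ i : Fin l, (f' i * ∑ j : Fin l, R i j * f t j
        + f t i * ∑ j : Fin l, R i j * f' j))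
      = 2 * (f' ⬝ᵥ R.mulVec (f t)) := by
    rw [Finset.sum_add_distrib]
    have e1 : (∑ i : Fin l, f' i * ∑ j : Fin l, R i j * f t j) = f' ⬝ᵥ R.mulVec (f t) := rfl
    have e2 : (∑ i : Fin l, f t i * ∑ j : Fin l, R i j * f' j) = f t ⬝ᵥ R.mulVec f' := rfl
    rw [e1, e2, hsym (f t) f']
    ring
  rw [he] at h1
  exact h1

theorem bessel_ineq (R : Matrix (Fin l) (Fin l) ℝ) (N : ℕ)
    (hpsd : ∀ v : Fin l → ℝ, 0 ≤ v ⬝ᵥ R.mulVec v)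
    (hsym : ∀ u v : Fin l → ℝ, u ⬝ᵥ R.mulVec v = v ⬝ᵥ R.mulVec u)
    (w : ℝ → Fin l → ℝ) (hw : Continuous w)
    (Ωv : ℕ → Fin l → ℝ)
    (hΩv : ∀ k i, Ωv k i = ∫ x in (0:ℝ)..1, w x i * shiftedLegendre k x) :
    (∑ k ∈ range (N+1), (2*(k:ℝ)+1) * (Ωv k ⬝ᵥ R.mulVec (Ωv k)))
      ≤ ∫ x in (0:ℝ)..1, w x ⬝ᵥ R.mulVec (w x) := by
  classical
  have hwi : ∀ i : Fin l, Continuous fun x : ℝ => w x i := fun i => (continuous_apply i).comp hw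
  set c : ℕ → ℝ := fun k => 2*(k:ℝ)+1 with hc
  have hcpos : ∀ k : ℕ, 0 < c k := fun k => by positivity
  set e : ℝ → Fin l → ℝ :=
    fun x => w x - ∑ k ∈ range (N+1), (c k * shiftedLegendre k x) • Ωv k with he
  have hpt : ∀ x : ℝ, e x ⬝ᵥ R.mulVec (e x)
      = w x ⬝ᵥ R.mulVec (w x)
        - 2 * ∑ k ∈ range (N+1), (c k * shiftedLegendre k x) * (w x ⬝ᵥ R.mulVec (Ωv k))
        + ∑ j ∈ range (N+1), ∑ k ∈ range (N+1),
            (c j * shiftedLegendre j x) * ((c k * shiftedLegendre k x)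
              * (Ωv j ⬝ᵥ R.mulVec (Ωv k))) := by
    intro x
    have hS2 : ∀ u : Fin l → ℝ, u ⬝ᵥ R.mulVec (∑ k ∈ range (N+1), (c k * shiftedLegendre k x) • Ωv k)
        = ∑ k ∈ range (N+1), (c k * shiftedLegendre k x) * (u ⬝ᵥ R.mulVec (Ωv k)) := by
      intro u
      rw [mulVec_sum', dotProduct_sum']
      exact Finset.sum_congr rfl fun k _ => by
        rw [Matrix.mulVec_smul, dotProduct_smul, smul_eq_mul]
    have hS1 : (∑ k ∈ range (N+1), (c k * shiftedLegendre k x) • Ωv k) ⬝ᵥ R.mulVec (w x)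
        = ∑ k ∈ range (N+1), (c k * shiftedLegendre k x) * (w x ⬝ᵥ R.mulVec (Ωv k)) := by
      rw [sum_dotProduct']
      exact Finset.sum_congr rfl fun k _ => by
        rw [smul_dotProduct, smul_eq_mul, hsym]
    have hSS : (∑ k ∈ range (N+1), (c k * shiftedLegendre k x) • Ωv k) ⬝ᵥ
          R.mulVec (∑ k ∈ range (N+1), (c k * shiftedLegendre k x) • Ωv k)
        = ∑ j ∈ range (N+1), ∑ k ∈ range (N+1),
            (c j * shiftedLegendre j x) * ((c k * shiftedLegendre k x)
              * (Ωv j ⬝ᵥ R.mulVec (Ωv k))) := by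
      rw [sum_dotProduct']
      refine Finset.sum_congr rfl fun j _ => ?_
      rw [smul_dotProduct, smul_eq_mul, hS2]
      rw [Finset.mul_sum]
    rw [he]
    simp only [Matrix.mulVec_sub, sub_dotProduct, dotProduct_sub]
    rw [hS1, hS2, hSS]
    ring
  -- integrability of pieces
  have hwq : Continuous fun x => w x ⬝ᵥ R.mulVec (w x) := cont_quad2 R hw hw
  have hBk : ∀ k : ℕ, Continuous fun x : ℝ =>
      (c k * shiftedLegendre k x) * (w x ⬝ᵥ R.mulVec (Ωv k)) := by
    intro k
    have : Continuous fun x : ℝ => w x ⬝ᵥ R.mulVec (Ωv k) := by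
      simp only [dotProduct]
      exact continuous_finset_sum _ fun i _ => (hwi i).mul continuous_const
    exact (continuous_const.mul (shiftedLegendre_continuous k)).mul this
  have hB : Continuous fun x : ℝ =>
      ∑ k ∈ range (N+1), (c k * shiftedLegendre k x) * (w x ⬝ᵥ R.mulVec (Ωv k)) :=
    continuous_finset_sum _ fun k _ => hBk k
  have hD : Continuous fun x : ℝ => ∑ j ∈ range (N+1), ∑ k ∈ range (N+1),
      (c j * shiftedLegendre j x) * ((c k * shiftedLegendre k x) * (Ωv j ⬝ᵥ R.mulVec (Ωv k))) :=
    continuous_finset_sum _ fun j _ => continuous_finset_sum _ fun k _ =>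
      (continuous_const.mul (shiftedLegendre_continuous j)).mul
        ((continuous_const.mul (shiftedLegendre_continuous k)).mul continuous_const)
  -- value of middle integral
  have hBval : (∫ x in (0:ℝ)..1,
      ∑ k ∈ range (N+1), (c k * shiftedLegendre k x) * (w x ⬝ᵥ R.mulVec (Ωv k)))
      = ∑ k ∈ range (N+1), c k * (Ωv k ⬝ᵥ R.mulVec (Ωv k)) := by
    rw [intervalIntegral.integral_finset_sum (fun k _ => ((hBk k).intervalIntegrable _ _))]
    refine Finset.sum_congr rfl fun k _ => ?_
    have e0 : (∫ x in (0:ℝ)..1, (c k * shiftedLegendre k x) * (w x ⬝ᵥ R.mulVec (Ωv k)))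
        = ∫ x in (0:ℝ)..1, ∑ i : Fin l, (c k * R.mulVec (Ωv k) i) * (w x i * shiftedLegendre k x) := by
      apply intervalIntegral.integral_congr
      intro x _
      simp only [dotProduct, Finset.mul_sum, Finset.sum_mul]
      exact Finset.sum_congr rfl fun i _ => by ring
    rw [e0, intervalIntegral.integral_finset_sum (fun i _ => Continuous.intervalIntegrable
      (continuous_const.fun_mul ((hwi i).fun_mul (shiftedLegendre_continuous k))) _ _)]
    have e1 : ∀ i : Fin l, (∫ x in (0:ℝ)..1, (c k * R.mulVec (Ωv k) i) * (w x i * shiftedLegendre k x))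
        = (c k * R.mulVec (Ωv k) i) * ∫ x in (0:ℝ)..1, w x i * shiftedLegendre k x :=
      fun i => intervalIntegral.integral_const_mul _ _
    rw [Finset.sum_congr rfl fun i _ => e1 i]
    have e2 : ∀ i : Fin l, (∫ x in (0:ℝ)..1, w x i * shiftedLegendre k x) = Ωv k i :=
      fun i => (hΩv k i).symm
    calc (∑ i : Fin l, (c k * R.mulVec (Ωv k) i) * ∫ x in (0:ℝ)..1, w x i * shiftedLegendre k x)
        = ∑ i : Fin l, (c k * R.mulVec (Ωv k) i) * Ωv k i := by
          exact Finset.sum_congr rfl fun i _ => by rw [e2]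
      _ = c k * (Ωv k ⬝ᵥ R.mulVec (Ωv k)) := by
          rw [dotProduct, Finset.mul_sum]
          exact Finset.sum_congr rfl fun i _ => by ring
  -- value of the double-sum integral
  have hDval : (∫ x in (0:ℝ)..1, ∑ j ∈ range (N+1), ∑ k ∈ range (N+1),
        (c j * shiftedLegendre j x) * ((c k * shiftedLegendre k x) * (Ωv j ⬝ᵥ R.mulVec (Ωv k))))
      = ∑ k ∈ range (N+1), c k * (Ωv k ⬝ᵥ R.mulVec (Ωv k)) := by
    rw [intervalIntegral.integral_finset_sum]
    · have inner : ∀ j ∈ range (N+1), (∫ x in (0:ℝ)..1, ∑ k ∈ range (N+1),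
          (c j * shiftedLegendre j x) * ((c k * shiftedLegendre k x) * (Ωv j ⬝ᵥ R.mulVec (Ωv k))))
          = c j * (Ωv j ⬝ᵥ R.mulVec (Ωv j)) := by
        intro j hj
        rw [intervalIntegral.integral_finset_sum]
        · have term : ∀ k ∈ range (N+1), (∫ x in (0:ℝ)..1,
              (c j * shiftedLegendre j x) * ((c k * shiftedLegendre k x) * (Ωv j ⬝ᵥ R.mulVec (Ωv k))))
              = (c j * c k * (Ωv j ⬝ᵥ R.mulVec (Ωv k))) *
                  (if j = k then 1 / (2 * (k:ℝ) + 1) else 0) := by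
            intro k _
            rw [← shiftedLegendre_orth j k, ← intervalIntegral.integral_const_mul]
            apply intervalIntegral.integral_congr
            intro x _
            ring
          rw [Finset.sum_congr rfl term]
          have : ∀ k ∈ range (N+1), (c j * c k * (Ωv j ⬝ᵥ R.mulVec (Ωv k))) *
              (if j = k then 1 / (2 * (k:ℝ) + 1) else 0)
              = if j = k then c j * (Ωv j ⬝ᵥ R.mulVec (Ωv j)) else 0 := by
            intro k _
            by_cases hjk : j = k
            · subst hjk
              rw [if_pos rfl, if_pos rfl]
              have : c j ≠ 0 := ne_of_gt (hcpos j)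
              rw [← show c j = 2*(j:ℝ)+1 from rfl, mul_one_div, div_eq_iff this]
              ring
            · simp [hjk]
          rw [Finset.sum_congr rfl this, Finset.sum_ite_eq (range (N+1)) j
            (fun _ => c j * (Ωv j ⬝ᵥ R.mulVec (Ωv j))), if_pos hj]
        · intro k _
          apply Continuous.intervalIntegrable
          exact (continuous_const.mul (shiftedLegendre_continuous j)).mul
            ((continuous_const.mul (shiftedLegendre_continuous k)).mul continuous_const)
      rw [Finset.sum_congr rfl inner]
    · intro j _
      apply Continuous.intervalIntegrable
      exact continuous_finset_sum _ fun k _ =>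
        (continuous_const.mul (shiftedLegendre_continuous j)).mul
          ((continuous_const.mul (shiftedLegendre_continuous k)).mul continuous_const)
  -- put together
  have hnonneg : (0:ℝ) ≤ ∫ x in (0:ℝ)..1, e x ⬝ᵥ R.mulVec (e x) :=
    intervalIntegral.integral_nonneg (by norm_num) (fun u _ => hpsd _)
  have hsplit : (∫ x in (0:ℝ)..1, e x ⬝ᵥ R.mulVec (e x))
      = (∫ x in (0:ℝ)..1, w x ⬝ᵥ R.mulVec (w x))
        - 2 * (∫ x in (0:ℝ)..1,
            ∑ k ∈ range (N+1), (c k * shiftedLegendre k x) * (w x ⬝ᵥ R.mulVec (Ωv k)))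
        + (∫ x in (0:ℝ)..1, ∑ j ∈ range (N+1), ∑ k ∈ range (N+1),
            (c j * shiftedLegendre j x) * ((c k * shiftedLegendre k x)
              * (Ωv j ⬝ᵥ R.mulVec (Ωv k)))) := by
    rw [← intervalIntegral.integral_const_mul, ← intervalIntegral.integral_sub
      (hwq.intervalIntegrable _ _) ((continuous_const.fun_mul hB).intervalIntegrable _ _),
      ← intervalIntegral.integral_add (((hwq.fun_sub (continuous_const.fun_mul hB))).intervalIntegrable _ _)
        (hD.intervalIntegrable _ _)]
    exact intervalIntegral.integral_congr fun x _ => hpt x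
  rw [hsplit, hBval, hDval] at hnonneg
  linarith

end Vec

/-- **Lemma 2** (finite-horizon IQC with zero terminal cost for the transport
equation): for `R ≻ 0` symmetric and `z` a solution of `z_t = −ρ z_x` on
`[0,1] × [0,∞)` with zero initial condition, for every `T ≥ 0`,
`∫₀^T ( z(0,t)ᵀ R z(0,t) − ∑_{k=0}^{N} (2k+1) Ω_k(t)ᵀ R Ω_k(t) ) dt ≥ 0`. -/
theorem transport_IQC_zero_terminal_cost
    (ρ : ℝ) (hρ : 0 < ρ) (l N : ℕ)
    (R : Matrix (Fin l) (Fin l) ℝ) (hRsymm : R.IsSymm)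
    (hRpd : ∀ v : Fin l → ℝ, v ≠ 0 → 0 < v ⬝ᵥ R.mulVec v)
    (z : ℝ × ℝ → Fin l → ℝ)
    (hz : ContDiff ℝ 1 z)
    (hpde : ∀ x ∈ Set.Icc (0:ℝ) 1, ∀ t ≥ (0:ℝ),
      deriv (fun s => z (x, s)) t = -ρ • deriv (fun y => z (y, t)) x)
    (hinit : ∀ x ∈ Set.Icc (0:ℝ) 1, z (x, 0) = 0)
    (Ω : ℕ → ℝ → Fin l → ℝ)
    (hΩ : ∀ k t i, Ω k t i = ∫ x in (0:ℝ)..1, z (x, t) i * shiftedLegendre k x) :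
    ∀ T ≥ (0:ℝ),
      (∫ t in (0:ℝ)..T,
        (z (0, t) ⬝ᵥ R.mulVec (z (0, t)) -
          ∑ k ∈ range (N + 1), (2 * (k : ℝ) + 1) * (Ω k t ⬝ᵥ R.mulVec (Ω k t)))) ≥ 0 := by
  intro T hT
  -- basic facts about R
  have hsym : ∀ u v : Fin l → ℝ, u ⬝ᵥ R.mulVec v = v ⬝ᵥ R.mulVec u := by
    intro u v
    rw [dotProduct_mulVec, ← hRsymm.eq, Matrix.vecMul_transpose, dotProduct_comm,
      hRsymm.eq]
  have hpsd : ∀ v : Fin l → ℝ, 0 ≤ v ⬝ᵥ R.mulVec v := by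
    intro v
    by_cases hv : v = 0
    · subst hv; simp
    · exact (hRpd v hv).le
  have hzc : Continuous z := hz.continuous
  -- derivative data
  have hdiff : ∀ p : ℝ × ℝ, HasFDerivAt z (fderiv ℝ z p) p :=
    fun p => (hz.differentiable one_ne_zero p).hasFDerivAt
  set Dt : ℝ × ℝ → Fin l → ℝ := fun p => fderiv ℝ z p (0, 1) with hDtdef
  set Dx : ℝ × ℝ → Fin l → ℝ := fun p => fderiv ℝ z p (1, 0) with hDxdef
  have hDt : ∀ x t : ℝ, HasDerivAt (fun s => z (x, s)) (Dt (x, t)) t := by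
    intro x t
    have hγ : HasDerivAt (fun s : ℝ => ((x : ℝ), s)) ((0 : ℝ), (1 : ℝ)) t :=
      (hasDerivAt_const t x).prodMk (hasDerivAt_id t)
    exact (hdiff (x, t)).comp_hasDerivAt t hγ
  have hDx : ∀ x t : ℝ, HasDerivAt (fun y => z (y, t)) (Dx (x, t)) x := by
    intro x t
    have hγ : HasDerivAt (fun y : ℝ => (y, (t : ℝ))) ((1 : ℝ), (0 : ℝ)) x :=
      (hasDerivAt_id x).prodMk (hasDerivAt_const x t)
    exact (hdiff (x, t)).comp_hasDerivAt x hγ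
  have hDtc : Continuous Dt := by
    have := (hz.continuous_fderiv one_ne_zero)
    exact this.clm_apply continuous_const
  have hDxc : Continuous Dx := by
    have := (hz.continuous_fderiv one_ne_zero)
    exact this.clm_apply continuous_const
  have hpde' : ∀ x ∈ Set.Icc (0:ℝ) 1, ∀ t ≥ (0:ℝ), Dt (x, t) = -ρ • Dx (x, t) := by
    intro x hx t ht
    have h1 := (hDt x t).deriv
    have h2 := (hDx x t).deriv
    rw [← h1, ← h2]
    exact hpde x hx t ht
  -- quadratic form
  set Q : ℝ × ℝ → ℝ := fun p => z p ⬝ᵥ R.mulVec (z p) with hQdef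
  set Qt : ℝ × ℝ → ℝ := fun p => 2 * (Dt p ⬝ᵥ R.mulVec (z p)) with hQtdef
  set Qx : ℝ × ℝ → ℝ := fun p => 2 * (Dx p ⬝ᵥ R.mulVec (z p)) with hQxdef
  have hQc : Continuous Q := cont_quad2 R hzc hzc
  have hQtc : Continuous Qt := continuous_const.mul (cont_quad2 R hDtc hzc)
  have hQxc : Continuous Qx := continuous_const.mul (cont_quad2 R hDxc hzc)
  have hQt : ∀ x t : ℝ, HasDerivAt (fun s => Q (x, s)) (Qt (x, t)) t :=
    fun x t => hasDerivAt_quad R hsym (hDt x t)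
  have hQx : ∀ x t : ℝ, HasDerivAt (fun y => Q (y, t)) (Qx (x, t)) x :=
    fun x t => hasDerivAt_quad R hsym (hDx x t)
  have hQpde : ∀ x ∈ Set.Icc (0:ℝ) 1, ∀ t ≥ (0:ℝ), Qt (x, t) = -ρ * Qx (x, t) := by
    intro x hx t ht
    rw [hQtdef, hQxdef]
    simp only
    rw [hpde' x hx t ht, smul_dotProduct, smul_eq_mul]
    ring
  have hQnn : ∀ p : ℝ × ℝ, 0 ≤ Q p := fun p => hpsd _
  have hQzero : ∀ x ∈ Set.Icc (0:ℝ) 1, Q (x, 0) = 0 := by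
    intro x hx
    rw [hQdef]; simp only [hinit x hx]; simp
  -- auxiliary functionals
  set U : ℝ → ℝ := fun t => ∫ x in (0:ℝ)..1, (1 - x) * Q (x, t) with hUdef
  set V : ℝ → ℝ := fun t => ∫ x in (0:ℝ)..1, Q (x, t) with hVdef
  set g : ℝ → ℝ := fun t => Q (0, t) with hgdef
  have hgc : Continuous g := hQc.comp (continuous_const.prodMk continuous_id)
  have hVc : Continuous V := by
    rw [hVdef]
    exact intervalIntegral.continuous_parametric_intervalIntegral_of_continuous'
      (f := fun t x => Q (x, t)) (hQc.comp continuous_swap) 0 1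
  have hFxc : ∀ s : ℝ, Continuous fun x => (1 - x) * Q (x, s) := fun s =>
    (continuous_const.sub continuous_id).mul (hQc.comp (continuous_id.prodMk continuous_const))
  have hFxc' : ∀ s : ℝ, Continuous fun x => (1 - x) * Qt (x, s) := fun s =>
    (continuous_const.sub continuous_id).mul (hQtc.comp (continuous_id.prodMk continuous_const))
  have hU' : ∀ t₀ : ℝ, HasDerivAt U (∫ x in (0:ℝ)..1, (1 - x) * Qt (x, t₀)) t₀ := by
    intro t₀
    obtain ⟨C, hC⟩ : ∃ C, ∀ p ∈ (Set.Icc (0:ℝ) 1 ×ˢ Set.Icc (t₀ - 1) (t₀ + 1)),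
        ‖(1 - p.1) * Qt p‖ ≤ C := by
      have hcomp : IsCompact (Set.Icc (0:ℝ) 1 ×ˢ Set.Icc (t₀ - 1) (t₀ + 1)) :=
        isCompact_Icc.prod isCompact_Icc
      exact hcomp.exists_bound_of_continuousOn
        (((continuous_const.sub continuous_fst).mul hQtc).continuousOn)
    have key := intervalIntegral.hasDerivAt_integral_of_dominated_loc_of_deriv_le
      (F := fun s x => (1 - x) * Q (x, s)) (F' := fun s x => (1 - x) * Qt (x, s))
      (x₀ := t₀) (a := (0:ℝ)) (b := (1:ℝ)) (bound := fun _ => C) (s := Metric.ball t₀ 1)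
      (μ := MeasureTheory.volume) (Metric.ball_mem_nhds t₀ one_pos)
      (Filter.Eventually.of_forall fun s => ((hFxc s).aestronglyMeasurable))
      (((hFxc t₀).intervalIntegrable _ _))
      ((hFxc' t₀).aestronglyMeasurable)
      (Filter.Eventually.of_forall fun x => by
        intro hx s hs
        rw [Set.uIoc_of_le (by norm_num : (0:ℝ) ≤ 1)] at hx
        refine hC (x, s) ⟨⟨le_of_lt hx.1, hx.2⟩, ?_⟩
        rw [Metric.mem_ball, Real.dist_eq, abs_sub_lt_iff] at hs
        exact ⟨by linarith [hs.1], by linarith [hs.2]⟩)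
      intervalIntegrable_const
      (Filter.Eventually.of_forall fun x => by
        intro hx s hs
        exact (hQt x s).const_mul (1 - x))
    exact key.2
  have hUderiv : ∀ t ∈ Set.Icc (0:ℝ) T, HasDerivAt U (ρ * g t - ρ * V t) t := by
    intro t ht
    have h1 := hU' t
    have e1 : (∫ x in (0:ℝ)..1, (1 - x) * Qt (x, t)) = ρ * g t - ρ * V t := by
      have e2 : (∫ x in (0:ℝ)..1, (1 - x) * Qt (x, t))
          = ∫ x in (0:ℝ)..1, -ρ * ((1 - x) * Qx (x, t)) := by
        apply intervalIntegral.integral_congr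
        intro x hx
        have hx' : x ∈ Set.Icc (0:ℝ) 1 := by rwa [Set.uIcc_of_le (by norm_num)] at hx
        simp only
        rw [hQpde x hx' t ht.1]
        ring
      rw [e2, intervalIntegral.integral_const_mul]
      have hparts := intervalIntegral.integral_mul_deriv_eq_deriv_mul (a := (0:ℝ)) (b := (1:ℝ))
        (u := fun y : ℝ => 1 - y) (v := fun y => Q (y, t))
        (u' := fun _ => (-1 : ℝ)) (v' := fun y => Qx (y, t))
        (fun x _ => by simpa using ((hasDerivAt_id x).const_sub 1))
        (fun x _ => hQx x t)
        intervalIntegrable_const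
        ((hQxc.comp (continuous_id.prodMk continuous_const)).intervalIntegrable _ _)
      rw [hparts]
      have e3 : (∫ x in (0:ℝ)..1, (-1 : ℝ) * Q (x, t)) = -V t := by
        rw [intervalIntegral.integral_const_mul, hVdef]; ring
      rw [e3]
      rw [hgdef, hVdef]
      simp only
      ring
    rw [← e1]; exact h1
  have hfc : Continuous fun t => ρ * g t - ρ * V t :=
    (continuous_const.mul hgc).sub (continuous_const.mul hVc)
  have hftc : (∫ t in (0:ℝ)..T, (ρ * g t - ρ * V t)) = U T - U 0 :=
    intervalIntegral.integral_eq_sub_of_hasDerivAt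
      (fun t ht => hUderiv t (by rwa [Set.uIcc_of_le hT] at ht))
      (hfc.intervalIntegrable _ _)
  have hU0 : U 0 = 0 := by
    rw [hUdef]
    simp only
    have e4 : (∫ x in (0:ℝ)..1, (1 - x) * Q (x, 0)) = ∫ x in (0:ℝ)..1, (0:ℝ) := by
      apply intervalIntegral.integral_congr
      intro x hx
      have hx' : x ∈ Set.Icc (0:ℝ) 1 := by rwa [Set.uIcc_of_le (by norm_num)] at hx
      simp only
      rw [hQzero x hx']
      ring
    rw [e4]; simp
  have hUT : 0 ≤ U T := by
    rw [hUdef]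
    apply intervalIntegral.integral_nonneg (by norm_num)
    intro x hx
    exact mul_nonneg (by linarith [hx.2]) (hQnn _)
  have henergy : (∫ t in (0:ℝ)..T, V t) ≤ ∫ t in (0:ℝ)..T, g t := by
    have hsplit : (∫ t in (0:ℝ)..T, (ρ * g t - ρ * V t))
        = ρ * (∫ t in (0:ℝ)..T, g t) - ρ * (∫ t in (0:ℝ)..T, V t) := by
      rw [intervalIntegral.integral_sub ((continuous_const.fun_mul hgc).intervalIntegrable _ _)
        ((continuous_const.fun_mul hVc).intervalIntegrable _ _),
        intervalIntegral.integral_const_mul, intervalIntegral.integral_const_mul]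
    have h9 : 0 ≤ ρ * ((∫ t in (0:ℝ)..T, g t) - (∫ t in (0:ℝ)..T, V t)) := by
      nlinarith [hftc, hU0, hUT, hsplit]
    nlinarith [h9, hρ]
  -- continuity of Ω and the projection sum
  have hΩc : ∀ k, Continuous fun t => Ω k t := by
    intro k
    apply continuous_pi
    intro i
    have e5 : (fun t => Ω k t i) = fun t => ∫ x in (0:ℝ)..1, z (x, t) i * shiftedLegendre k x :=
      funext fun t => hΩ k t i
    rw [e5]
    exact intervalIntegral.continuous_parametric_intervalIntegral_of_continuous'
      (f := fun t x => z (x, t) i * shiftedLegendre k x)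
      ((((continuous_apply i).comp (hzc.comp continuous_swap))).mul
        ((shiftedLegendre_continuous k).comp continuous_snd)) 0 1
  set S : ℝ → ℝ :=
    fun t => ∑ k ∈ range (N+1), (2*(k:ℝ)+1) * (Ω k t ⬝ᵥ R.mulVec (Ω k t)) with hSdef
  have hSc : Continuous S :=
    continuous_finset_sum _ fun k _ => continuous_const.mul (cont_quad2 R (hΩc k) (hΩc k))
  have hbessel : ∀ t : ℝ, S t ≤ V t := by
    intro t
    have hw : Continuous fun x => z (x, t) := hzc.comp (continuous_id.prodMk continuous_const)
    have hb := bessel_ineq R N hpsd hsym (fun x => z (x, t)) hw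
      (fun k => Ω k t) (fun k i => hΩ k t i)
    exact hb
  have hgoal : (0:ℝ) ≤ ∫ t in (0:ℝ)..T, (g t - S t) := by
    have h1 : (∫ t in (0:ℝ)..T, (g t - S t))
        = (∫ t in (0:ℝ)..T, g t) - (∫ t in (0:ℝ)..T, S t) :=
      intervalIntegral.integral_sub (hgc.intervalIntegrable _ _) (hSc.intervalIntegrable _ _)
    have h2 : (∫ t in (0:ℝ)..T, (V t - S t))
        = (∫ t in (0:ℝ)..T, V t) - (∫ t in (0:ℝ)..T, S t) :=
      intervalIntegral.integral_sub (hVc.intervalIntegrable _ _) (hSc.intervalIntegrable _ _)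
    have h3 : (0:ℝ) ≤ ∫ t in (0:ℝ)..T, (V t - S t) :=
      intervalIntegral.integral_nonneg hT fun t _ => sub_nonneg.2 (hbessel t)
    linarith [henergy]
  exact hgoal
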